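/- Let G be a finite connected simple graph, q : D(G) → ℍ a map, and U the quaternionic transition matrix determined by q. If U is quaternionic unitary, then for every arc e ∈ D(G), the real part q₀(e) of q(e) satisfies 0 ≤ q₀(e) ≤ 2/d_{o(e)}. -/

import Mathlib

noncomputable section

variable {V : Type*}

/-- The quaternionic transition matrix determined by `q : D(G) → ℍ`. -/
def quatTransition [Fintype V] [DecidableEq V] (G : SimpleGraph V) [DecidableRel G.Adj]
    (q : G.Dart → Quaternion ℝ) : Matrix G.Dart G.Dart (Quaternion ℝ) := fun e f =>
  if f = e.symm then q e - 1
  else if f.toProd.2 = e.toProd.1 then q e else 0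

theorem dart_snd_fiber_card_eq_degree [Fintype V] [DecidableEq V] (G : SimpleGraph V)
    [DecidableRel G.Adj] (v : V) :
    (Finset.univ.filter fun d : G.Dart => d.toProd.2 = v).card = G.degree v := by
  rw [← SimpleGraph.dart_fst_fiber_card_eq_degree G v]
  apply Finset.card_nbij' (fun d => d.symm) (fun d => d.symm)
  · intro d hd
    simp only [Finset.mem_filter, Finset.mem_univ, true_and] at hd ⊢
    simpa [SimpleGraph.Dart.symm_toProd] using hd
  · intro d hd
    simp only [Finset.mem_filter, Finset.mem_univ, true_and] at hd ⊢
    simpa [SimpleGraph.Dart.symm_toProd] using hd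
  · intro d _; exact d.symm_symm
  · intro d _; exact d.symm_symm

/-- if the quaternionic transition matrix U is quaternionic unitary, then
for every arc e the real part q₀(e) of q(e) satisfies 0 ≤ q₀(e) ≤ 2/d_{o(e)}. -/
theorem quatTransition_unitary_re_bounds [Fintype V] [DecidableEq V] (G : SimpleGraph V)
    [DecidableRel G.Adj] (hG : G.Connected) (q : G.Dart → Quaternion ℝ)
    (hU : star (quatTransition G q) * quatTransition G q = 1 ∧
          quatTransition G q * star (quatTransition G q) = 1) :
    ∀ e : G.Dart, 0 ≤ (q e).re ∧ (q e).re ≤ 2 / (G.degree e.toProd.1 : ℝ) := by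
  intro e
  obtain ⟨-, hU2⟩ := hU
  set U := quatTransition G q with hUdef
  -- step 1: sum of normSq of row e is 1
  have hentry : ∑ f : G.Dart, Quaternion.normSq (U e f) = 1 := by
    have h := congrFun (congrFun hU2 e) e
    rw [Matrix.mul_apply, Matrix.one_apply_eq] at h
    have h2 : ((∑ f, Quaternion.normSq (U e f) : ℝ) : Quaternion ℝ) = 1 := by
      rw [show ((∑ f, Quaternion.normSq (U e f) : ℝ) : Quaternion ℝ)
          = ∑ f, (((Quaternion.normSq (U e f) : ℝ)) : Quaternion ℝ) from
        map_sum (algebraMap ℝ (Quaternion ℝ)) _ _, ← h]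
      refine Finset.sum_congr rfl fun f _ => ?_
      rw [Matrix.star_apply]
      exact (Quaternion.self_mul_star _).symm
    rw [show (1:Quaternion ℝ) = ((1:ℝ):Quaternion ℝ) by norm_num,
      Quaternion.coe_inj] at h2
    exact h2
  -- step 2: compute the sum
  set S : Finset G.Dart := Finset.univ.filter fun f => f.toProd.2 = e.toProd.1 with hS
  have hsymmS : e.symm ∈ S := by
    simp [hS, SimpleGraph.Dart.symm_toProd]
  have hsum1 : ∑ f : G.Dart, Quaternion.normSq (U e f) = ∑ f ∈ S, Quaternion.normSq (U e f) := by
    symm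
    apply Finset.sum_filter_of_ne
    intro f _ hne
    by_contra hP
    apply hne
    have hfe : f ≠ e.symm := by
      rintro rfl
      exact hP (by simp [SimpleGraph.Dart.symm_toProd])
    simp [hUdef, quatTransition, hfe, hP]
  set n : ℕ := G.degree e.toProd.1 with hn
  have hcardS : S.card = n := dart_snd_fiber_card_eq_degree G e.toProd.1
  have hn1 : 1 ≤ n := (G.degree_pos_iff_exists_adj _).mpr ⟨e.toProd.2, e.adj⟩
  have hsum2 : ∑ f ∈ S, Quaternion.normSq (U e f)
      = Quaternion.normSq (q e - 1) + (n - 1 : ℝ) * Quaternion.normSq (q e) := by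
    rw [← Finset.add_sum_erase S _ hsymmS]
    congr 1
    · simp [hUdef, quatTransition]
    · rw [Finset.sum_congr rfl (fun f hf => ?_), Finset.sum_const,
        Finset.card_erase_of_mem hsymmS, hcardS, nsmul_eq_mul]
      · congr 1
        have : (1:ℝ) ≤ (n:ℝ) := by exact_mod_cast hn1
        push_cast [Nat.cast_sub hn1]
        ring
      · obtain ⟨hfne, hfS⟩ := Finset.mem_erase.mp hf
        have hP : f.toProd.2 = e.toProd.1 := by simpa [hS] using hfS
        simp [hUdef, quatTransition, hfne, hP]
  -- combine
  have key : (n : ℝ) * Quaternion.normSq (q e) = 2 * (q e).re := by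
    have := hentry
    rw [hsum1, hsum2] at this
    have hns : Quaternion.normSq (q e - 1)
        = Quaternion.normSq (q e) - 2 * (q e).re + 1 := by
      simp [Quaternion.normSq_def', Quaternion.re_one, Quaternion.imI_one, Quaternion.imJ_one, Quaternion.imK_one]
      ring
    rw [hns] at this
    linarith
  have hnpos : (0:ℝ) < n := by exact_mod_cast hn1
  have hnsq : (0:ℝ) ≤ Quaternion.normSq (q e) := Quaternion.normSq_nonneg
  have hre0 : 0 ≤ (q e).re := by nlinarith
  refine ⟨hre0, ?_⟩
  have hsqle : (q e).re ^ 2 ≤ Quaternion.normSq (q e) := by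
    rw [Quaternion.normSq_def']
    nlinarith [sq_nonneg (q e).imI, sq_nonneg (q e).imJ, sq_nonneg (q e).imK]
  rw [le_div_iff₀ hnpos]
  nlinarith [mul_le_mul_of_nonneg_left hsqle (le_of_lt hnpos), sq_nonneg ((q e).re * n - 2)]
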